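/- For all integers m ≥ 1 and n ≥ 1, the following identities hold in ℤ[t]: (i) Σ_w t^{des(w)}, summed over all Smirnov words w of length n over [m] with w_1 < w_n, equals Σ_{σ ∈ S_n, σ(1)<σ(n)} t^{des(σ)} · C(m + |Des_{≥2}(σ^{−1})|, n); (ii) Σ_w t^{cdes(w)}, summed over all Smirnov words w of length n over [m], equals Σ_{σ ∈ S_n} t^{cdes(σ)} · C(m + |Des_{≥2}(σ^{−1})|, n); here C(a,b) denotes the binomial coefficient. -/

import Mathlib

open Finset MvPolynomial Polynomial

attribute [local instance] Classical.propDecidable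

noncomputable section

/-- The descent number of a word `w = w₁⋯wₙ` over the alphabet `[k]`:
the number of indices `i ∈ [n-1]` with `wᵢ > wᵢ₊₁`. -/
def desc {n k : ℕ} (w : Fin n → Fin k) : ℕ :=
  (Finset.univ.filter fun i : Fin n =>
    ∃ h : (i : ℕ) + 1 < n, w ⟨(i : ℕ) + 1, h⟩ < w i).card

/-- The cyclic descent number: the number of indices `i ∈ [n]` with `wᵢ > wᵢ₊₁`,
where `wₙ₊₁ := w₁`. -/
def cdesc {n k : ℕ} (w : Fin n → Fin k) : ℕ :=
  (Finset.univ.filter fun i : Fin n =>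
    w ⟨((i : ℕ) + 1) % n, Nat.mod_lt _ i.pos⟩ < w i).card

/-- A word is Smirnov if no two adjacent letters are equal. -/
def IsSmirnov {n k : ℕ} (w : Fin n → Fin k) : Prop :=
  ∀ i : Fin n, ∀ h : (i : ℕ) + 1 < n, w ⟨(i : ℕ) + 1, h⟩ ≠ w i

/-- the first letter is strictly smaller than the last letter -/
def FirstLtLast {n k : ℕ} (w : Fin n → Fin k) : Prop :=
  ∃ h : 0 < n, w ⟨0, h⟩ < w ⟨n - 1, Nat.sub_lt h Nat.one_pos⟩

/-- the first letter is strictly larger than the last letter -/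
def FirstGtLast {n k : ℕ} (w : Fin n → Fin k) : Prop :=
  ∃ h : 0 < n, w ⟨n - 1, Nat.sub_lt h Nat.one_pos⟩ < w ⟨0, h⟩

/-- the first letter equals the last letter -/
def FirstEqLast {n k : ℕ} (w : Fin n → Fin k) : Prop :=
  ∃ h : 0 < n, w ⟨0, h⟩ = w ⟨n - 1, Nat.sub_lt h Nat.one_pos⟩

/-- the first letter differs from the last letter -/
def FirstNeLast {n k : ℕ} (w : Fin n → Fin k) : Prop :=
  ∃ h : 0 < n, w ⟨0, h⟩ ≠ w ⟨n - 1, Nat.sub_lt h Nat.one_pos⟩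

/-- `Des_{≥2}(σ) = {i ∈ [n-1] : σ(i) - σ(i+1) ≥ 2}`, recorded via 0-based gap positions:
gap `g ∈ {0,…,n-2}` corresponds to the adjacent pair `(σ g, σ (g+1))`. -/
def Des2 {n : ℕ} (σ : Equiv.Perm (Fin n)) : Finset ℕ :=
  (Finset.range n).filter fun g =>
    ∃ h : g + 1 < n, (σ ⟨g + 1, h⟩ : ℕ) + 2 ≤ (σ ⟨g, Nat.lt_of_succ_lt h⟩ : ℕ)

/-- `Asc_{≥2}(σ) = {i ∈ [n-1] : σ(i+1) - σ(i) ≥ 2}`, recorded via 0-based gap positions. -/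
def Asc2 {n : ℕ} (σ : Equiv.Perm (Fin n)) : Finset ℕ :=
  (Finset.range n).filter fun g =>
    ∃ h : g + 1 < n, (σ ⟨g, Nat.lt_of_succ_lt h⟩ : ℕ) + 2 ≤ (σ ⟨g + 1, h⟩ : ℕ)

/-- `maj_{≥2}(σ) = Σ i` over the (1-based) positions `i ∈ [n-1]` with `σ(i+1) - σ(i) ≥ 2`;
a 0-based gap `g` corresponds to the 1-based position `g + 1`. -/
def maj2 {n : ℕ} (σ : Equiv.Perm (Fin n)) : ℕ :=
  ∑ g ∈ Asc2 σ, (g + 1)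

/-- The Eulerian polynomial `A_m(t) = Σ_{σ ∈ S_m} t^{des σ}`. -/
def Eul (R : Type) [CommRing R] (m : ℕ) : Polynomial R :=
  ∑ σ : Equiv.Perm (Fin m), Polynomial.X ^ desc ⇑σ

namespace SmirnovAux

open Finset

variable {n m : ℕ}

lemma step_mono (N : ℕ) (f : ℕ → ℕ) (h : ∀ g, g + 1 < N → f g ≤ f (g + 1)) :
    ∀ i j, j < N → i ≤ j → f i ≤ f j := by
  intro i j
  induction j with
  | zero => intro _ hi; obtain rfl : i = 0 := Nat.le_zero.mp hi; exact le_rfl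
  | succ j ih =>
    intro hj hi
    rcases Nat.eq_or_lt_of_le hi with rfl | hi'
    · exact le_rfl
    · exact le_trans (ih (Nat.lt_of_succ_lt hj) (Nat.lt_succ_iff.mp hi'))
        (h j hj)

lemma step_strict (N : ℕ) (f : ℕ → ℕ) (h : ∀ g, g + 1 < N → f g + 1 ≤ f (g + 1)) :
    ∀ i j, j < N → i ≤ j → f i + (j - i) ≤ f j := by
  intro i j
  induction j with
  | zero => intro _ hi; obtain rfl : i = 0 := Nat.le_zero.mp hi; simp
  | succ j ih =>
    intro hj hi
    rcases Nat.eq_or_lt_of_le hi with rfl | hi'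
    · simp
    · have h1 := ih (Nat.lt_of_succ_lt hj) (Nat.lt_succ_iff.mp hi')
      have h2 := h j hj
      omega

lemma step_eqprop (N : ℕ) (v s : ℕ → ℕ)
    (hmono : ∀ g, g + 1 < N → v g ≤ v (g + 1))
    (hdrop : ∀ g, g + 1 < N → v g = v (g + 1) → s (g + 1) + 2 ≤ s g) :
    ∀ i j, j < N → i < j → v i = v j → s j + 2 ≤ s i := by
  intro i j
  induction j with
  | zero => omega
  | succ j ih =>
    intro hj hi hv
    rcases Nat.eq_or_lt_of_le (Nat.lt_succ_iff.mp hi) with rfl | hi'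
    · exact hdrop i hj hv
    · have hj' : j < N := Nat.lt_of_succ_lt hj
      have h1 : v i ≤ v j := step_mono N v hmono i j hj' (le_of_lt hi')
      have h2 : v j ≤ v (j + 1) := hmono j hj
      have e1 := ih hj' hi' (by omega)
      have e2 := hdrop j hj (by omega)
      omega

end SmirnovAux

namespace SmirnovAux
open Finset
variable {n m : ℕ}

lemma mem_Des2 {σ : Equiv.Perm (Fin n)} {g : ℕ} (hg : g + 1 < n) :
    g ∈ Des2 σ ↔ (σ ⟨g + 1, hg⟩ : ℕ) + 2 ≤ (σ ⟨g, Nat.lt_of_succ_lt hg⟩ : ℕ) := by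
  simp only [Des2, Finset.mem_filter, Finset.mem_range]
  constructor
  · rintro ⟨-, h, hle⟩; exact hle
  · intro hle; exact ⟨Nat.lt_of_succ_lt hg, hg, hle⟩

lemma not_mem_Des2 {σ : Equiv.Perm (Fin n)} {g : ℕ} (hg : ¬ (g + 1 < n)) :
    g ∉ Des2 σ := by
  simp only [Des2, Finset.mem_filter, Finset.mem_range]
  rintro ⟨-, h, -⟩; exact hg h

/-- number of elements of `Des2 σ` below `i` -/
def eF (σ : Equiv.Perm (Fin n)) (i : ℕ) : ℕ := ((Des2 σ).filter (fun g => g < i)).card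

lemma eF_le_card (σ : Equiv.Perm (Fin n)) (i : ℕ) : eF σ i ≤ (Des2 σ).card :=
  Finset.card_le_card (Finset.filter_subset _ _)

lemma eF_le (σ : Equiv.Perm (Fin n)) (i : ℕ) : eF σ i ≤ i := by
  have : (Des2 σ).filter (fun g => g < i) ⊆ Finset.range i := by
    intro g hg
    simp only [Finset.mem_filter] at hg
    exact Finset.mem_range.mpr hg.2
  simpa [eF] using Finset.card_le_card this

lemma eF_succ (σ : Equiv.Perm (Fin n)) (g : ℕ) :
    eF σ (g + 1) = eF σ g + (if g ∈ Des2 σ then 1 else 0) := by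
  unfold eF
  have : (Des2 σ).filter (fun x => x < g + 1)
      = (Des2 σ).filter (fun x => x < g) ∪ (Des2 σ).filter (fun x => x = g) := by
    rw [← Finset.filter_or]
    apply Finset.filter_congr
    intro x _
    constructor
    · intro h; omega
    · intro h; omega
  rw [this, Finset.card_union_of_disjoint, Finset.filter_eq']
  · split <;> simp
  · rw [Finset.disjoint_left]
    intro x hx hx'
    simp only [Finset.mem_filter] at hx hx'
    omega

lemma eF_full (σ : Equiv.Perm (Fin n)) {i : ℕ} (hi : n - 1 ≤ i) :
    eF σ i = (Des2 σ).card := by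
  unfold eF
  congr 1
  apply Finset.filter_true_of_mem
  intro g hg
  by_cases h : g + 1 < n
  · omega
  · exact absurd hg (not_mem_Des2 h)

lemma eF_growth (σ : Equiv.Perm (Fin n)) {i j : ℕ} (hij : i ≤ j) :
    eF σ j ≤ eF σ i + (j - i) := by
  unfold eF
  have hsub : (Des2 σ).filter (fun g => g < j)
      ⊆ (Des2 σ).filter (fun g => g < i) ∪ Finset.Ico i j := by
    intro g hg
    simp only [Finset.mem_filter, Finset.mem_union, Finset.mem_Ico] at hg ⊢
    rcases lt_or_ge g i with h | h
    · exact Or.inl ⟨hg.1, h⟩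
    · exact Or.inr ⟨h, hg.2⟩
  calc ((Des2 σ).filter (fun g => g < j)).card
      ≤ _ := Finset.card_le_card hsub
    _ ≤ ((Des2 σ).filter (fun g => g < i)).card + (Finset.Ico i j).card :=
        Finset.card_union_le _ _
    _ = _ := by rw [Nat.card_Ico]

end SmirnovAux

namespace SmirnovAux
open Finset
variable {n m : ℕ}

/-- the compatibility condition on the weakly increasing word `v` relative to `σ` -/
def GoodV (σ : Equiv.Perm (Fin n)) (v : Fin n → Fin m) : Prop :=
  (∀ i j : Fin n, i ≤ j → v i ≤ v j) ∧
  (∀ i j : Fin n, i < j → v i = v j → (σ j : ℕ) + 2 ≤ (σ i : ℕ))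

/-- sort key: value, ties broken by decreasing position -/
def sortKey (w : Fin n → Fin m) : Fin n → ℕ := fun i => (w i : ℕ) * n + (n - 1 - (i : ℕ))

/-- the sorting permutation of a word -/
def Phi (w : Fin n → Fin m) : Equiv.Perm (Fin n) := Tuple.sort (sortKey w)

/-- the word associated to `σ` and `v` -/
def wordOf (σ : Equiv.Perm (Fin n)) (v : Fin n → Fin m) : Fin n → Fin m :=
  fun p => v (σ.symm p)

lemma good_cmp {σ : Equiv.Perm (Fin n)} {v : Fin n → Fin m} (hG : GoodV σ v)
    (p q : Fin n) (hpq : (q : ℕ) < (p : ℕ) + 2) :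
    wordOf σ v q < wordOf σ v p ↔ σ.symm q < σ.symm p := by
  constructor
  · intro h
    by_contra h'
    push_neg at h'
    exact absurd (hG.1 _ _ h') (not_le.mpr h)
  · intro h
    rcases lt_or_eq_of_le (hG.1 _ _ h.le) with h1 | h1
    · exact h1
    · exfalso
      have := hG.2 _ _ h h1
      simp only [Equiv.apply_symm_apply] at this
      omega

lemma smirnov_of_good {σ : Equiv.Perm (Fin n)} {v : Fin n → Fin m} (hG : GoodV σ v) :
    IsSmirnov (wordOf σ v) := by
  intro i h heq
  set a := σ.symm ⟨(i : ℕ) + 1, h⟩ with ha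
  set b := σ.symm i with hb
  have hab : a ≠ b := by
    intro hh
    have : (⟨(i : ℕ) + 1, h⟩ : Fin n) = i := σ.symm.injective hh
    have := congrArg Fin.val this
    simp at this
  rcases lt_trichotomy a b with hlt | hEq | hgt
  · have := hG.2 a b hlt heq
    simp only [ha, hb, Equiv.apply_symm_apply] at this
    omega
  · exact hab hEq
  · have := hG.2 b a hgt heq.symm
    simp only [ha, hb, Equiv.apply_symm_apply] at this
    omega

lemma desc_of_good {σ : Equiv.Perm (Fin n)} {v : Fin n → Fin m} (hG : GoodV σ v) :
    desc (wordOf σ v) = desc ⇑σ⁻¹ := by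
  unfold desc
  congr 1
  apply Finset.filter_congr
  intro i _
  constructor
  · rintro ⟨h, hlt⟩
    exact ⟨h, (good_cmp hG i ⟨(i : ℕ) + 1, h⟩ (by simp)).mp hlt⟩
  · rintro ⟨h, hlt⟩
    exact ⟨h, (good_cmp hG i ⟨(i : ℕ) + 1, h⟩ (by simp)).mpr hlt⟩

lemma cdesc_of_good {σ : Equiv.Perm (Fin n)} {v : Fin n → Fin m} (hG : GoodV σ v) :
    cdesc (wordOf σ v) = cdesc ⇑σ⁻¹ := by
  unfold cdesc
  congr 1
  apply Finset.filter_congr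
  intro i _
  have hpq : ((⟨((i : ℕ) + 1) % n, Nat.mod_lt _ i.pos⟩ : Fin n) : ℕ) < (i : ℕ) + 2 := by
    have := Nat.mod_le ((i : ℕ) + 1) n
    simp only []
    omega
  exact good_cmp hG i ⟨((i : ℕ) + 1) % n, Nat.mod_lt _ i.pos⟩ hpq

lemma firstLtLast_of_good {σ : Equiv.Perm (Fin n)} {v : Fin n → Fin m} (hG : GoodV σ v) :
    FirstLtLast (wordOf σ v) ↔ FirstLtLast ⇑σ⁻¹ := by
  unfold FirstLtLast
  apply exists_congr
  intro h
  exact good_cmp hG ⟨n - 1, Nat.sub_lt h Nat.one_pos⟩ ⟨0, h⟩ (by simp)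

end SmirnovAux

namespace SmirnovAux
open Finset
variable {n m : ℕ}

lemma key_lt_of_val_lt {w : Fin n → Fin m} {a b : Fin n} (h : (w a : ℕ) < (w b : ℕ)) :
    sortKey w a < sortKey w b := by
  unfold sortKey
  have h1 : ((w a : ℕ) + 1) * n ≤ (w b : ℕ) * n := Nat.mul_le_mul_right n h
  rw [Nat.succ_mul] at h1
  have h2 : n - 1 - (a : ℕ) < n := by have := a.isLt; omega
  omega

lemma val_le_of_key_le {w : Fin n → Fin m} {a b : Fin n} (h : sortKey w a ≤ sortKey w b) :
    (w a : ℕ) ≤ (w b : ℕ) := by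
  by_contra hc
  push_neg at hc
  exact absurd h (not_le.mpr (key_lt_of_val_lt hc))

lemma key_strictMono_of_good {σ : Equiv.Perm (Fin n)} {v : Fin n → Fin m} (hG : GoodV σ v) :
    StrictMono (fun i => sortKey (wordOf σ v) (σ i)) := by
  intro i j hij
  have hw : ∀ x : Fin n, wordOf σ v (σ x) = v x := by
    intro x; unfold wordOf; rw [Equiv.symm_apply_apply]
  have hle : v i ≤ v j := hG.1 i j hij.le
  rcases lt_or_eq_of_le hle with hlt | heq
  · exact key_lt_of_val_lt (by rw [hw, hw]; exact hlt)
  · have hs := hG.2 i j hij heq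
    show sortKey (wordOf σ v) (σ i) < sortKey (wordOf σ v) (σ j)
    unfold sortKey
    rw [hw, hw, heq]
    have h1 : (σ i : ℕ) < n := (σ i).isLt
    have h2 : (σ j : ℕ) < n := (σ j).isLt
    omega

lemma phi_of_good {σ : Equiv.Perm (Fin n)} {v : Fin n → Fin m} (hG : GoodV σ v) :
    Phi (wordOf σ v) = σ := by
  unfold Phi
  symm
  rw [Tuple.eq_sort_iff]
  refine ⟨(key_strictMono_of_good hG).monotone, fun i j hij heq => ?_⟩
  exact absurd heq (ne_of_lt (key_strictMono_of_good hG hij))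

lemma good_of_smirnov {σ : Equiv.Perm (Fin n)} {w : Fin n → Fin m}
    (hs : IsSmirnov w) (hp : Phi w = σ) : GoodV σ (fun i => w (σ i)) := by
  have hmono : Monotone (fun i => sortKey w (σ i)) := by
    have := Tuple.monotone_sort (sortKey w)
    rw [show Tuple.sort (sortKey w) = σ from hp] at this
    exact this
  constructor
  · intro i j hij
    have := val_le_of_key_le (hmono hij)
    exact this
  · intro i j hij heq
    have hkey := hmono hij.le
    have hvale : (w (σ i) : ℕ) = (w (σ j) : ℕ) := congrArg Fin.val heq
    have hprod : (w (σ i) : ℕ) * n = (w (σ j) : ℕ) * n := by rw [hvale]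
    have hr : n - 1 - (σ i : ℕ) ≤ n - 1 - (σ j : ℕ) := by
      unfold sortKey at hkey
      simp only [] at hkey
      omega
    have hne : σ i ≠ σ j := fun hh => (ne_of_lt hij) (σ.injective hh)
    have h1 : (σ i : ℕ) < n := (σ i).isLt
    have h2 : (σ j : ℕ) < n := (σ j).isLt
    have hji : (σ j : ℕ) < (σ i : ℕ) := by
      rcases Nat.lt_or_ge (σ j : ℕ) (σ i : ℕ) with h | h
      · exact h
      · exfalso
        rcases Nat.eq_or_lt_of_le h with h' | h'
        · exact hne (Fin.ext h')
        · omega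
    by_contra hc
    push_neg at hc
    have hadj : (σ i : ℕ) = (σ j : ℕ) + 1 := by omega
    have hh : (σ j : ℕ) + 1 < n := by omega
    have := hs ⟨(σ j : ℕ), by omega⟩ hh
    apply this
    have e1 : (⟨(σ j : ℕ) + 1, hh⟩ : Fin n) = σ i := Fin.ext (by simp [hadj])
    have e2 : (⟨(σ j : ℕ), by omega⟩ : Fin n) = σ j := Fin.ext rfl
    rw [e1, e2]
    exact heq
end SmirnovAux

namespace SmirnovAux
open Finset
variable {n m : ℕ}

def natOf {k : ℕ} (f : Fin n → Fin k) : ℕ → ℕ :=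
  fun i => if h : i < n then (f ⟨i, h⟩ : ℕ) else 0

lemma natOf_fin {k : ℕ} (f : Fin n → Fin k) (i : Fin n) : natOf f (i : ℕ) = (f i : ℕ) := by
  simp [natOf, i.isLt]

lemma natOf_step {k : ℕ} {u : Fin n → Fin k} (hu : StrictMono u) :
    ∀ g, g + 1 < n → natOf u g + 1 ≤ natOf u (g + 1) := by
  intro g hg
  have hlt : (⟨g, Nat.lt_of_succ_lt hg⟩ : Fin n) < ⟨g + 1, hg⟩ := by
    simp [Fin.mk_lt_mk]
  have := hu hlt
  rw [Fin.lt_def] at this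
  simp only [natOf, dif_pos hg, dif_pos (Nat.lt_of_succ_lt hg)]
  omega

lemma natOf_ge {k : ℕ} {u : Fin n → Fin k} (hu : StrictMono u) (i : ℕ) (hi : i < n) :
    i ≤ natOf u i := by
  have := step_strict n (natOf u) (natOf_step hu) 0 i hi (Nat.zero_le _)
  omega

def toU (σ : Equiv.Perm (Fin n)) (v : Fin n → Fin m) : Fin n → Fin (m + (Des2 σ).card) :=
  fun i => ⟨(v i : ℕ) + eF σ (i : ℕ), by
    have h1 := (v i).isLt
    have h2 := eF_le_card σ (i : ℕ)
    omega⟩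

def toV (σ : Equiv.Perm (Fin n)) (hm : 0 < m) (u : Fin n → Fin (m + (Des2 σ).card)) :
    Fin n → Fin m :=
  fun i => ⟨((u i : ℕ) - eF σ (i : ℕ)) % m, Nat.mod_lt _ hm⟩

lemma toU_strictMono {σ : Equiv.Perm (Fin n)} {v : Fin n → Fin m} (hv : GoodV σ v) :
    StrictMono (toU σ v) := by
  have hstep : ∀ g, g + 1 < n → natOf (toU σ v) g + 1 ≤ natOf (toU σ v) (g + 1) := by
    intro g hg
    have hg' := Nat.lt_of_succ_lt hg
    simp only [natOf, dif_pos hg, dif_pos hg', toU]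
    rw [eF_succ]
    have hle : (v ⟨g, hg'⟩ : ℕ) ≤ (v ⟨g + 1, hg⟩ : ℕ) :=
      hv.1 ⟨g, hg'⟩ ⟨g + 1, hg⟩ (by simp [Fin.mk_le_mk])
    by_cases hmem : g ∈ Des2 σ
    · simp only [hmem, if_true]
      omega
    · simp only [hmem, if_false]
      rcases Nat.eq_or_lt_of_le hle with heq | hlt
      · exfalso
        have heqf : v ⟨g, hg'⟩ = v ⟨g + 1, hg⟩ := Fin.ext heq
        have := hv.2 ⟨g, hg'⟩ ⟨g + 1, hg⟩ (by simp [Fin.mk_lt_mk]) heqf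
        exact hmem ((mem_Des2 hg).mpr this)
      · omega
  intro i j hij
  have hijn : (i : ℕ) < (j : ℕ) := hij
  have := step_strict n (natOf (toU σ v)) hstep (i : ℕ) (j : ℕ) j.isLt (le_of_lt hijn)
  rw [natOf_fin, natOf_fin] at this
  rw [Fin.lt_def]
  omega

lemma u_bounds {σ : Equiv.Perm (Fin n)} (hm : 0 < m) (hn : 0 < n)
    {u : Fin n → Fin (m + (Des2 σ).card)} (hu : StrictMono u) (i : Fin n) :
    eF σ (i : ℕ) ≤ (u i : ℕ) ∧ (u i : ℕ) - eF σ (i : ℕ) < m := by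
  have h1 : eF σ (i : ℕ) ≤ (i : ℕ) := eF_le σ _
  have h2 : (i : ℕ) ≤ natOf u (i : ℕ) := natOf_ge hu _ i.isLt
  have h3 : natOf u (i : ℕ) = (u i : ℕ) := natOf_fin u i
  have hi' : (i : ℕ) ≤ n - 1 := by have := i.isLt; omega
  have hlast : n - 1 < n := by omega
  have hchain := step_strict n (natOf u) (natOf_step hu) (i : ℕ) (n - 1) hlast hi'
  have htop : natOf u (n - 1) ≤ m + (Des2 σ).card - 1 := by
    simp only [natOf, dif_pos hlast]
    have := (u ⟨n - 1, hlast⟩).isLt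
    omega
  have hfull : eF σ (n - 1) = (Des2 σ).card := eF_full σ (le_refl _)
  have hgrow := eF_growth σ hi'
  rw [hfull] at hgrow
  constructor
  · omega
  · omega

lemma toV_good {σ : Equiv.Perm (Fin n)} (hm : 0 < m) (hn : 0 < n)
    {u : Fin n → Fin (m + (Des2 σ).card)} (hu : StrictMono u) :
    GoodV σ (toV σ hm u) := by
  have hb := u_bounds hm hn hu
  have hval : ∀ i : Fin n, (toV σ hm u i : ℕ) = (u i : ℕ) - eF σ (i : ℕ) := by
    intro i
    simp only [toV]
    exact Nat.mod_eq_of_lt (hb i).2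
  constructor
  · intro i j hij
    rcases Nat.eq_or_lt_of_le (show (i : ℕ) ≤ (j : ℕ) from hij) with heq | hlt
    · have : i = j := Fin.ext heq
      subst this; exact le_rfl
    · have hchain := step_strict n (natOf u) (natOf_step hu) (i : ℕ) (j : ℕ) j.isLt (le_of_lt hlt)
      rw [natOf_fin, natOf_fin] at hchain
      have hgrow := eF_growth σ (le_of_lt hlt)
      have h1 := (hb i).1
      rw [Fin.le_def, hval, hval]
      omega
  · intro i j hij heqf
    have heq : (toV σ hm u i : ℕ) = (toV σ hm u j : ℕ) := congrArg Fin.val heqf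
    rw [hval, hval] at heq
    have hstep0 := natOf_step hu
    have key := step_eqprop n (fun x => natOf u x - eF σ x) (natOf ⇑σ)
      (by
        intro g hg
        show natOf u g - eF σ g ≤ natOf u (g + 1) - eF σ (g + 1)
        have h1 := hstep0 g hg
        have h2 := eF_succ σ g
        have h3 : eF σ g ≤ natOf u g := by
          have := eF_le σ g
          have := natOf_ge hu g (Nat.lt_of_succ_lt hg)
          omega
        split at h2 <;> omega)
      (by
        intro g hg hveq
        have hveq' : natOf u g - eF σ g = natOf u (g + 1) - eF σ (g + 1) := hveq
        have hg' := Nat.lt_of_succ_lt hg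
        simp only [natOf, dif_pos hg, dif_pos hg']
        by_cases hmem : g ∈ Des2 σ
        · exact (mem_Des2 hg).mp hmem
        · exfalso
          have h1 := hstep0 g hg
          have h2 := eF_succ σ g
          rw [if_neg hmem] at h2
          have h3 : eF σ g ≤ natOf u g := by
            have := eF_le σ g
            have := natOf_ge hu g hg'
            omega
          omega)
      (i : ℕ) (j : ℕ) j.isLt hij
      (by
        show natOf u (i : ℕ) - eF σ (i : ℕ) = natOf u (j : ℕ) - eF σ (j : ℕ)
        rw [natOf_fin, natOf_fin]; exact heq)
    rw [natOf_fin, natOf_fin] at key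
    exact key

lemma toV_toU {σ : Equiv.Perm (Fin n)} (hm : 0 < m) {v : Fin n → Fin m} :
    toV σ hm (toU σ v) = v := by
  funext i
  apply Fin.ext
  simp only [toV, toU, Nat.add_sub_cancel]
  exact Nat.mod_eq_of_lt (v i).isLt

lemma toU_toV {σ : Equiv.Perm (Fin n)} (hm : 0 < m) (hn : 0 < n)
    {u : Fin n → Fin (m + (Des2 σ).card)} (hu : StrictMono u) :
    toU σ (toV σ hm u) = u := by
  have hb := u_bounds hm hn hu
  funext i
  apply Fin.ext
  simp only [toU, toV]
  rw [Nat.mod_eq_of_lt (hb i).2]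
  have := (hb i).1
  omega

end SmirnovAux

namespace SmirnovAux
open Finset
variable {n m : ℕ}

lemma card_strictMono_filter (N r : ℕ) :
    ((Finset.univ : Finset (Fin r → Fin N)).filter fun u => StrictMono u).card = N.choose r := by
  have h1 : (Finset.powersetCard r (Finset.univ : Finset (Fin N))).card = N.choose r := by
    rw [Finset.card_powersetCard, Finset.card_univ, Fintype.card_fin]
  rw [← h1]
  refine Finset.card_bij'
    (i := fun u _ => Finset.image u Finset.univ)
    (j := fun s hs => ⇑(s.orderEmbOfFin (Finset.mem_powersetCard.mp hs).2))
    ?hi ?hj ?left_inv ?right_inv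
  case hi =>
    intro u hu
    obtain ⟨-, hu2⟩ := Finset.mem_filter.mp hu
    rw [Finset.mem_powersetCard]
    refine ⟨Finset.subset_univ _, ?_⟩
    rw [Finset.card_image_of_injective _ hu2.injective, Finset.card_univ, Fintype.card_fin]
  case hj =>
    intro s hs
    rw [Finset.mem_filter]
    exact ⟨Finset.mem_univ _, (s.orderEmbOfFin _).strictMono⟩
  case left_inv =>
    intro u hu
    obtain ⟨-, hu2⟩ := Finset.mem_filter.mp hu
    symm
    apply Finset.orderEmbOfFin_unique
    · intro x
      exact Finset.mem_image_of_mem u (Finset.mem_univ x)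
    · exact hu2
  case right_inv =>
    intro s hs
    ext x
    simp only [Finset.mem_image, Finset.mem_univ, true_and]
    constructor
    · rintro ⟨i, rfl⟩
      exact Finset.orderEmbOfFin_mem _ _ _
    · intro hx
      have : x ∈ Set.range ⇑(s.orderEmbOfFin (Finset.mem_powersetCard.mp hs).2) := by
        rw [Finset.range_orderEmbOfFin]
        exact hx
      rcases this with ⟨i, rfl⟩
      exact ⟨i, rfl⟩

lemma card_good (σ : Equiv.Perm (Fin n)) (hm : 0 < m) (hn : 0 < n) :
    ((Finset.univ : Finset (Fin n → Fin m)).filter fun v => GoodV σ v).card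
      = (m + (Des2 σ).card).choose n := by
  rw [← card_strictMono_filter (m + (Des2 σ).card) n]
  apply Finset.card_nbij' (toU σ) (toV σ hm)
  · intro v hv
    rw [Finset.mem_coe, Finset.mem_filter] at hv ⊢
    exact ⟨Finset.mem_univ _, toU_strictMono hv.2⟩
  · intro u hu
    rw [Finset.mem_coe, Finset.mem_filter] at hu ⊢
    exact ⟨Finset.mem_univ _, toV_good hm hn hu.2⟩
  · intro v hv
    exact toV_toU hm
  · intro u hu
    rw [Finset.mem_coe, Finset.mem_filter] at hu
    exact toU_toV hm hn hu.2

lemma card_fiber (σ : Equiv.Perm (Fin n)) (hm : 0 < m) (hn : 0 < n) :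
    (((Finset.univ : Finset (Fin n → Fin m)).filter fun w => IsSmirnov w).filter
        fun w => Phi w = σ).card = (m + (Des2 σ).card).choose n := by
  rw [← card_good σ hm hn]
  apply Finset.card_nbij' (fun w => fun i => w (σ i)) (fun v => wordOf σ v)
  · intro w hw
    simp only [Finset.mem_coe, Finset.mem_filter] at hw ⊢
    exact ⟨Finset.mem_univ _, good_of_smirnov hw.1.2 hw.2⟩
  · intro v hv
    simp only [Finset.mem_coe, Finset.mem_filter] at hv ⊢
    exact ⟨⟨Finset.mem_univ _, smirnov_of_good hv.2⟩, phi_of_good hv.2⟩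
  · intro w hw
    funext p
    simp [wordOf]
  · intro v hv
    funext i
    simp [wordOf]

lemma fiber_facts {σ : Equiv.Perm (Fin n)} {w : Fin n → Fin m}
    (hs : IsSmirnov w) (hp : Phi w = σ) :
    desc w = desc ⇑σ⁻¹ ∧ cdesc w = cdesc ⇑σ⁻¹ ∧ (FirstLtLast w ↔ FirstLtLast ⇑σ⁻¹) := by
  have hg := good_of_smirnov hs hp
  have hw : wordOf σ (fun i => w (σ i)) = w := by
    funext p
    simp [wordOf]
  refine ⟨?_, ?_, ?_⟩ <;> rw [← hw]
  · exact desc_of_good hg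
  · exact cdesc_of_good hg
  · exact firstLtLast_of_good hg

end SmirnovAux


open SmirnovAux in
/-- Specializations: for Smirnov words over `[m]`,
`Σ_{w, w₁<wₙ} t^{des w} = Σ_{σ(1)<σ(n)} t^{des σ} C(m + |Des_{≥2}(σ⁻¹)|, n)` and
`Σ_w t^{cdes w} = Σ_{σ ∈ S_n} t^{cdes σ} C(m + |Des_{≥2}(σ⁻¹)|, n)`. -/
theorem smirnov_specialization (m n : ℕ) (hm : 1 ≤ m) (hn : 1 ≤ n) :
    ((∑ w ∈ Finset.univ.filter (fun w : Fin n → Fin m => IsSmirnov w ∧ FirstLtLast w),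
        (Polynomial.X : Polynomial ℤ) ^ desc w) =
      ∑ σ ∈ Finset.univ.filter (fun σ : Equiv.Perm (Fin n) => FirstLtLast ⇑σ),
        ((m + (Des2 σ⁻¹).card).choose n : Polynomial ℤ) * Polynomial.X ^ desc ⇑σ) ∧
    ((∑ w ∈ Finset.univ.filter (fun w : Fin n → Fin m => IsSmirnov w),
        (Polynomial.X : Polynomial ℤ) ^ cdesc w) =
      ∑ σ : Equiv.Perm (Fin n),
        ((m + (Des2 σ⁻¹).card).choose n : Polynomial ℤ) * Polynomial.X ^ cdesc ⇑σ) := by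
  have hm0 : 0 < m := hm
  have hn0 : 0 < n := hn
  constructor
  · -- part (i)
    have h1 := Finset.sum_fiberwise
      (Finset.univ.filter (fun w : Fin n → Fin m => IsSmirnov w ∧ FirstLtLast w))
      Phi (fun w => (Polynomial.X : Polynomial ℤ) ^ desc w)
    rw [← h1]
    have hinner : ∀ σ : Equiv.Perm (Fin n),
        (∑ w ∈ (Finset.univ.filter (fun w : Fin n → Fin m => IsSmirnov w ∧ FirstLtLast w)).filter
            (fun w => Phi w = σ), (Polynomial.X : Polynomial ℤ) ^ desc w)
          = if FirstLtLast ⇑σ⁻¹ then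
              ((m + (Des2 σ).card).choose n : Polynomial ℤ) * Polynomial.X ^ desc ⇑σ⁻¹
            else 0 := by
      intro σ
      by_cases hF : FirstLtLast ⇑σ⁻¹
      · rw [if_pos hF]
        have hset : (Finset.univ.filter
              (fun w : Fin n → Fin m => IsSmirnov w ∧ FirstLtLast w)).filter
                (fun w => Phi w = σ)
            = (Finset.univ.filter (fun w : Fin n → Fin m => IsSmirnov w)).filter
                (fun w => Phi w = σ) := by
          ext w
          simp only [Finset.mem_filter, Finset.mem_univ, true_and]
          constructor
          · rintro ⟨⟨h1, h2⟩, h3⟩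
            exact ⟨h1, h3⟩
          · rintro ⟨h1, h3⟩
            exact ⟨⟨h1, (fiber_facts h1 h3).2.2.mpr hF⟩, h3⟩
        rw [hset]
        have hconst : ∀ w ∈ (Finset.univ.filter
              (fun w : Fin n → Fin m => IsSmirnov w)).filter (fun w => Phi w = σ),
            (Polynomial.X : Polynomial ℤ) ^ desc w
              = (Polynomial.X : Polynomial ℤ) ^ desc ⇑σ⁻¹ := by
          intro w hw
          obtain ⟨hw1, hw2⟩ := Finset.mem_filter.mp hw
          obtain ⟨-, hsm⟩ := Finset.mem_filter.mp hw1
          rw [(fiber_facts hsm hw2).1]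
        rw [Finset.sum_congr rfl hconst, Finset.sum_const, card_fiber σ hm0 hn0,
          nsmul_eq_mul]
      · rw [if_neg hF]
        convert Finset.sum_empty
        ext w
        simp only [Finset.mem_filter, Finset.mem_univ, true_and, Finset.notMem_empty,
          iff_false]
        rintro ⟨⟨h1, h2⟩, h3⟩
        exact hF ((fiber_facts h1 h3).2.2.mp h2)
    rw [Finset.sum_congr rfl (fun σ _ => hinner σ)]
    have h2 := Fintype.sum_equiv (Equiv.inv (Equiv.Perm (Fin n)))
      (fun σ : Equiv.Perm (Fin n) =>
        if FirstLtLast ⇑σ⁻¹ then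
          ((m + (Des2 σ).card).choose n : Polynomial ℤ) * Polynomial.X ^ desc ⇑σ⁻¹
        else 0)
      (fun σ : Equiv.Perm (Fin n) =>
        if FirstLtLast ⇑σ then
          ((m + (Des2 σ⁻¹).card).choose n : Polynomial ℤ) * Polynomial.X ^ desc ⇑σ
        else 0)
      (fun σ => by simp [Equiv.inv_apply])
    rw [h2, Finset.sum_filter]
  · -- part (ii)
    have h1 := Finset.sum_fiberwise
      (Finset.univ.filter (fun w : Fin n → Fin m => IsSmirnov w))
      Phi (fun w => (Polynomial.X : Polynomial ℤ) ^ cdesc w)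
    rw [← h1]
    have hinner : ∀ σ : Equiv.Perm (Fin n),
        (∑ w ∈ (Finset.univ.filter (fun w : Fin n → Fin m => IsSmirnov w)).filter
            (fun w => Phi w = σ), (Polynomial.X : Polynomial ℤ) ^ cdesc w)
          = ((m + (Des2 σ).card).choose n : Polynomial ℤ) * Polynomial.X ^ cdesc ⇑σ⁻¹ := by
      intro σ
      have hconst : ∀ w ∈ (Finset.univ.filter
            (fun w : Fin n → Fin m => IsSmirnov w)).filter (fun w => Phi w = σ),
          (Polynomial.X : Polynomial ℤ) ^ cdesc w
            = (Polynomial.X : Polynomial ℤ) ^ cdesc ⇑σ⁻¹ := by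
        intro w hw
        obtain ⟨hw1, hw2⟩ := Finset.mem_filter.mp hw
        obtain ⟨-, hsm⟩ := Finset.mem_filter.mp hw1
        rw [(fiber_facts hsm hw2).2.1]
      rw [Finset.sum_congr rfl hconst, Finset.sum_const, card_fiber σ hm0 hn0,
        nsmul_eq_mul]
    rw [Finset.sum_congr rfl (fun σ _ => hinner σ)]
    exact Fintype.sum_equiv (Equiv.inv (Equiv.Perm (Fin n)))
      (fun σ : Equiv.Perm (Fin n) =>
        ((m + (Des2 σ).card).choose n : Polynomial ℤ) * Polynomial.X ^ cdesc ⇑σ⁻¹)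
      (fun σ : Equiv.Perm (Fin n) =>
        ((m + (Des2 σ⁻¹).card).choose n : Polynomial ℤ) * Polynomial.X ^ cdesc ⇑σ)
      (fun σ => by simp [Equiv.inv_apply])

end
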